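/- (Rescaled optimality estimate.) With c_ε as above and π_ε optimal for the ε-problem, for every three-plan π̃ whose (S,X)-marginal and (S,Y)-marginal are optimal GW plans, one has ∬ (d_X(x,x') − d_Y(y,y'))² dπ_ε dπ_ε ≤ ∬ (d_X(x,x') − d_Y(y,y'))² dπ̃ dπ̃ for every ε > 0. -/

import Mathlib

open MeasureTheory Filter Topology

/-- The Gromov–Wasserstein cost of a plan `π` on `X × Y`. -/
noncomputable def gwCost {X Y : Type*} [PseudoMetricSpace X] [PseudoMetricSpace Y]
    [MeasurableSpace X] [MeasurableSpace Y] (π : Measure (X × Y)) : ℝ :=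
  ∫ p, ∫ q, (dist p.1 q.1 - dist p.2 q.2) ^ 2 ∂π ∂π

/-- `π` is a coupling of `μ` and `ν`. -/
def IsCoupling {X Y : Type*} [MeasurableSpace X] [MeasurableSpace Y]
    (π : Measure (X × Y)) (μ : Measure X) (ν : Measure Y) : Prop :=
  π.map Prod.fst = μ ∧ π.map Prod.snd = ν

/-- The squared Gromov–Wasserstein distance. -/
noncomputable def gwSq {X Y : Type*} [PseudoMetricSpace X] [PseudoMetricSpace Y]
    [MeasurableSpace X] [MeasurableSpace Y] (μ : Measure X) (ν : Measure Y) : ℝ :=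
  sInf {c | ∃ π : Measure (X × Y), IsCoupling π μ ν ∧ c = gwCost π}

/-- `π` is an optimal Gromov–Wasserstein plan between `μ` and `ν`. -/
def IsOptGW {X Y : Type*} [PseudoMetricSpace X] [PseudoMetricSpace Y]
    [MeasurableSpace X] [MeasurableSpace Y]
    (π : Measure (X × Y)) (μ : Measure X) (ν : Measure Y) : Prop :=
  IsCoupling π μ ν ∧ gwCost π = gwSq μ ν

/-- The LGW objective of a three-plan on `S × X × Y`:
`∬ |d_X(x,x') − d_Y(y,y')|² dπ dπ`. -/
noncomputable def lgwCost {S X Y : Type*} [PseudoMetricSpace X] [PseudoMetricSpace Y]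
    [MeasurableSpace S] [MeasurableSpace X] [MeasurableSpace Y]
    (π : Measure (S × X × Y)) : ℝ :=
  ∫ p, ∫ q, (dist p.2.1 q.2.1 - dist p.2.2 q.2.2) ^ 2 ∂π ∂π

/-- The linear Gromov–Wasserstein value with reference `(S, σ)`:
infimum of the LGW objective over three-plans whose `(S,X)`- and `(S,Y)`-marginals
are optimal GW plans. -/
noncomputable def lgw {S X Y : Type*} [PseudoMetricSpace S] [PseudoMetricSpace X]
    [PseudoMetricSpace Y] [MeasurableSpace S] [MeasurableSpace X] [MeasurableSpace Y]
    (σ : Measure S) (μ : Measure X) (ν : Measure Y) : ℝ :=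
  sInf {c | ∃ π : Measure (S × X × Y),
    IsOptGW (π.map (fun p => (p.1, p.2.1))) σ μ ∧
    IsOptGW (π.map (fun p => (p.1, p.2.2))) σ ν ∧
    c = lgwCost π}

/-- The cost `c_ε` on `(S × X × Y)²`. -/
noncomputable def cEps {S X Y : Type*} [PseudoMetricSpace S] [PseudoMetricSpace X]
    [PseudoMetricSpace Y] (ε : ℝ) (p q : S × X × Y) : ℝ :=
  ε * (dist p.2.1 q.2.1 - dist p.2.2 q.2.2) ^ 2
    + (dist p.1 q.1 - dist p.2.1 q.2.1) ^ 2
    + (dist p.1 q.1 - dist p.2.2 q.2.2) ^ 2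

/-- The quadratic functional `π ↦ ∬ c_ε dπ dπ` of the ε-multi-marginal GW problem. -/
noncomputable def mgwEps {S X Y : Type*} [PseudoMetricSpace S] [PseudoMetricSpace X]
    [PseudoMetricSpace Y] [MeasurableSpace S] [MeasurableSpace X] [MeasurableSpace Y]
    (ε : ℝ) (π : Measure (S × X × Y)) : ℝ :=
  ∫ p, ∫ q, cEps ε p q ∂π ∂π

/-- `π ∈ Π(σ, μ, ν)`: three-marginal coupling. -/
def IsTripleCoupling {S X Y : Type*} [MeasurableSpace S] [MeasurableSpace X]
    [MeasurableSpace Y] (π : Measure (S × X × Y))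
    (σ : Measure S) (μ : Measure X) (ν : Measure Y) : Prop :=
  π.map Prod.fst = σ ∧ π.map (fun p => p.2.1) = μ ∧ π.map (fun p => p.2.2) = ν


private lemma cont_integrable {α : Type*} [MetricSpace α] [CompactSpace α]
    [MeasurableSpace α] [OpensMeasurableSpace α] (μ : Measure α) [IsFiniteMeasure μ]
    {f : α → ℝ} (hf : Continuous f) : Integrable f μ := by
  rw [← integrableOn_univ]
  exact hf.continuousOn.integrableOn_compact isCompact_univ

private lemma gwCost_nonneg {X Y : Type*} [PseudoMetricSpace X] [PseudoMetricSpace Y]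
    [MeasurableSpace X] [MeasurableSpace Y] (π : Measure (X × Y)) : 0 ≤ gwCost π :=
  integral_nonneg fun _ => integral_nonneg fun _ => sq_nonneg _

private lemma gwSq_le {X Y : Type*} [PseudoMetricSpace X] [PseudoMetricSpace Y]
    [MeasurableSpace X] [MeasurableSpace Y] (μ : Measure X) (ν : Measure Y)
    (π : Measure (X × Y)) (h : IsCoupling π μ ν) : gwSq μ ν ≤ gwCost π := by
  apply csInf_le
  · exact ⟨0, fun c hc => by obtain ⟨π', _, rfl⟩ := hc; exact gwCost_nonneg π'⟩
  · exact ⟨π, h, rfl⟩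

section Decomp

variable {S X Y : Type*}
    [MetricSpace S] [CompactSpace S] [MeasurableSpace S] [BorelSpace S]
    [MetricSpace X] [CompactSpace X] [MeasurableSpace X] [BorelSpace X]
    [MetricSpace Y] [CompactSpace Y] [MeasurableSpace Y] [BorelSpace Y]

private lemma gwCost_map_fst (π : Measure (S × X × Y)) [IsProbabilityMeasure π] :
    gwCost (π.map (fun p => (p.1, p.2.1)))
      = ∫ z, (dist z.1.1 z.2.1 - dist z.1.2.1 z.2.2.1) ^ 2 ∂(π.prod π) := by
  have hm : Measurable (fun p : S × X × Y => (p.1, p.2.1)) :=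
    measurable_fst.prodMk measurable_snd.fst
  have hG : Continuous (fun z : (S × X) × (S × X) =>
      (dist z.1.1 z.2.1 - dist z.1.2 z.2.2) ^ 2) := by fun_prop
  have hI : Integrable (fun z : (S × X) × (S × X) =>
      (dist z.1.1 z.2.1 - dist z.1.2 z.2.2) ^ 2)
      ((π.map (fun p => (p.1, p.2.1))).prod (π.map (fun p => (p.1, p.2.1)))) := by
    have : IsProbabilityMeasure (π.map (fun p : S × X × Y => (p.1, p.2.1))) :=
      Measure.isProbabilityMeasure_map hm.aemeasurable
    exact cont_integrable _ hG
  have h1 : gwCost (π.map (fun p => (p.1, p.2.1)))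
      = ∫ z, (dist z.1.1 z.2.1 - dist z.1.2 z.2.2) ^ 2
          ∂((π.map (fun p => (p.1, p.2.1))).prod (π.map (fun p => (p.1, p.2.1)))) :=
    (integral_prod _ hI).symm
  rw [h1, Measure.map_prod_map π π hm hm,
    integral_map (hm.prodMap hm).aemeasurable hG.aestronglyMeasurable]
  rfl

private lemma gwCost_map_snd (π : Measure (S × X × Y)) [IsProbabilityMeasure π] :
    gwCost (π.map (fun p => (p.1, p.2.2)))
      = ∫ z, (dist z.1.1 z.2.1 - dist z.1.2.2 z.2.2.2) ^ 2 ∂(π.prod π) := by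
  have hm : Measurable (fun p : S × X × Y => (p.1, p.2.2)) :=
    measurable_fst.prodMk measurable_snd.snd
  have hG : Continuous (fun z : (S × Y) × (S × Y) =>
      (dist z.1.1 z.2.1 - dist z.1.2 z.2.2) ^ 2) := by fun_prop
  have hI : Integrable (fun z : (S × Y) × (S × Y) =>
      (dist z.1.1 z.2.1 - dist z.1.2 z.2.2) ^ 2)
      ((π.map (fun p => (p.1, p.2.2))).prod (π.map (fun p => (p.1, p.2.2)))) := by
    have : IsProbabilityMeasure (π.map (fun p : S × X × Y => (p.1, p.2.2))) :=
      Measure.isProbabilityMeasure_map hm.aemeasurable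
    exact cont_integrable _ hG
  have h1 : gwCost (π.map (fun p => (p.1, p.2.2)))
      = ∫ z, (dist z.1.1 z.2.1 - dist z.1.2 z.2.2) ^ 2
          ∂((π.map (fun p => (p.1, p.2.2))).prod (π.map (fun p => (p.1, p.2.2)))) :=
    (integral_prod _ hI).symm
  rw [h1, Measure.map_prod_map π π hm hm,
    integral_map (hm.prodMap hm).aemeasurable hG.aestronglyMeasurable]
  rfl

private lemma lgwCost_eq (π : Measure (S × X × Y)) [IsProbabilityMeasure π] :
    lgwCost π = ∫ z, (dist z.1.2.1 z.2.2.1 - dist z.1.2.2 z.2.2.2) ^ 2 ∂(π.prod π) := by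
  have hI : Integrable (fun z : (S × X × Y) × (S × X × Y) =>
      (dist z.1.2.1 z.2.2.1 - dist z.1.2.2 z.2.2.2) ^ 2) (π.prod π) :=
    cont_integrable _ (by fun_prop)
  exact (integral_prod _ hI).symm

private lemma mgw_decomp (ε : ℝ) (π : Measure (S × X × Y)) [IsProbabilityMeasure π] :
    mgwEps ε π = ε * lgwCost π + gwCost (π.map (fun p => (p.1, p.2.1)))
      + gwCost (π.map (fun p => (p.1, p.2.2))) := by
  have hIL : Integrable (fun z : (S × X × Y) × (S × X × Y) =>
      (dist z.1.2.1 z.2.2.1 - dist z.1.2.2 z.2.2.2) ^ 2) (π.prod π) :=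
    cont_integrable _ (by fun_prop)
  have hIA : Integrable (fun z : (S × X × Y) × (S × X × Y) =>
      (dist z.1.1 z.2.1 - dist z.1.2.1 z.2.2.1) ^ 2) (π.prod π) :=
    cont_integrable _ (by fun_prop)
  have hIB : Integrable (fun z : (S × X × Y) × (S × X × Y) =>
      (dist z.1.1 z.2.1 - dist z.1.2.2 z.2.2.2) ^ 2) (π.prod π) :=
    cont_integrable _ (by fun_prop)
  have hIc : Integrable (fun z : (S × X × Y) × (S × X × Y) => cEps ε z.1 z.2) (π.prod π) :=
    cont_integrable _ (by unfold cEps; fun_prop)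
  have h0 : mgwEps ε π = ∫ z, cEps ε z.1 z.2 ∂(π.prod π) := (integral_prod _ hIc).symm
  rw [h0, lgwCost_eq, gwCost_map_fst, gwCost_map_snd]
  have : (fun z : (S × X × Y) × (S × X × Y) => cEps ε z.1 z.2)
      = fun z => ε * (dist z.1.2.1 z.2.2.1 - dist z.1.2.2 z.2.2.2) ^ 2
          + (dist z.1.1 z.2.1 - dist z.1.2.1 z.2.2.1) ^ 2
          + (dist z.1.1 z.2.1 - dist z.1.2.2 z.2.2.2) ^ 2 := rfl
  have e1 : (∫ z : (S × X × Y) × (S × X × Y),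
        ε * (dist z.1.2.1 z.2.2.1 - dist z.1.2.2 z.2.2.2) ^ 2
          + (dist z.1.1 z.2.1 - dist z.1.2.1 z.2.2.1) ^ 2
          + (dist z.1.1 z.2.1 - dist z.1.2.2 z.2.2.2) ^ 2 ∂(π.prod π))
      = (∫ z, ε * (dist z.1.2.1 z.2.2.1 - dist z.1.2.2 z.2.2.2) ^ 2
          + (dist z.1.1 z.2.1 - dist z.1.2.1 z.2.2.1) ^ 2 ∂(π.prod π))
        + ∫ z, (dist z.1.1 z.2.1 - dist z.1.2.2 z.2.2.2) ^ 2 ∂(π.prod π) :=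
    integral_add ((hIL.const_mul ε).add hIA) hIB
  have e2 : (∫ z : (S × X × Y) × (S × X × Y),
        ε * (dist z.1.2.1 z.2.2.1 - dist z.1.2.2 z.2.2.2) ^ 2
          + (dist z.1.1 z.2.1 - dist z.1.2.1 z.2.2.1) ^ 2 ∂(π.prod π))
      = (∫ z, ε * (dist z.1.2.1 z.2.2.1 - dist z.1.2.2 z.2.2.2) ^ 2 ∂(π.prod π))
        + ∫ z, (dist z.1.1 z.2.1 - dist z.1.2.1 z.2.2.1) ^ 2 ∂(π.prod π) :=
    integral_add (hIL.const_mul ε) hIA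
  have e3 : (∫ z : (S × X × Y) × (S × X × Y),
        ε * (dist z.1.2.1 z.2.2.1 - dist z.1.2.2 z.2.2.2) ^ 2 ∂(π.prod π))
      = ε * ∫ z, (dist z.1.2.1 z.2.2.1 - dist z.1.2.2 z.2.2.2) ^ 2 ∂(π.prod π) :=
    MeasureTheory.integral_const_mul ε _
  rw [this, e1, e2, e3]

end Decomp

/-- rescaled optimality estimate: the minimizer `π_ε` of the ε-problem has
LGW objective at most that of any three-plan with optimal marginals. -/
theorem rescaled_optimality
    {S X Y : Type*}
    [MetricSpace S] [CompactSpace S] [MeasurableSpace S] [BorelSpace S]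
    [MetricSpace X] [CompactSpace X] [MeasurableSpace X] [BorelSpace X]
    [MetricSpace Y] [CompactSpace Y] [MeasurableSpace Y] [BorelSpace Y]
    (σ : Measure S) (μ : Measure X) (ν : Measure Y)
    [IsProbabilityMeasure σ] [IsProbabilityMeasure μ] [IsProbabilityMeasure ν]
    (ε : ℝ) (hε : 0 < ε)
    (πε : Measure (S × X × Y)) [IsProbabilityMeasure πε]
    (hcoup : IsTripleCoupling πε σ μ ν)
    (hopt : ∀ π' : Measure (S × X × Y), IsTripleCoupling π' σ μ ν →
      mgwEps ε πε ≤ mgwEps ε π')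
    (πt : Measure (S × X × Y)) [IsProbabilityMeasure πt]
    (h₁ : IsOptGW (πt.map (fun p => (p.1, p.2.1))) σ μ)
    (h₂ : IsOptGW (πt.map (fun p => (p.1, p.2.2))) σ ν) :
    lgwCost πε ≤ lgwCost πt := by
  have hm1 : Measurable (fun p : S × X × Y => (p.1, p.2.1)) :=
    measurable_fst.prodMk measurable_snd.fst
  have hm2 : Measurable (fun p : S × X × Y => (p.1, p.2.2)) :=
    measurable_fst.prodMk measurable_snd.snd
  -- πt is a triple coupling
  have htcoup : IsTripleCoupling πt σ μ ν := by
    refine ⟨?_, ?_, ?_⟩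
    · have := h₁.1.1
      rwa [Measure.map_map measurable_fst hm1] at this
    · have := h₁.1.2
      rwa [Measure.map_map measurable_snd hm1] at this
    · have := h₂.1.2
      rwa [Measure.map_map measurable_snd hm2] at this
  -- the marginals of πε are couplings
  have hc1 : IsCoupling (πε.map (fun p => (p.1, p.2.1))) σ μ := by
    constructor
    · rw [Measure.map_map measurable_fst hm1]; exact hcoup.1
    · rw [Measure.map_map measurable_snd hm1]; exact hcoup.2.1
  have hc2 : IsCoupling (πε.map (fun p => (p.1, p.2.2))) σ ν := by
    constructor
    · rw [Measure.map_map measurable_fst hm2]; exact hcoup.1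
    · rw [Measure.map_map measurable_snd hm2]; exact hcoup.2.2
  have hA : gwSq σ μ ≤ gwCost (πε.map (fun p => (p.1, p.2.1))) := gwSq_le σ μ _ hc1
  have hB : gwSq σ ν ≤ gwCost (πε.map (fun p => (p.1, p.2.2))) := gwSq_le σ ν _ hc2
  have hineq := hopt πt htcoup
  rw [mgw_decomp ε πε, mgw_decomp ε πt, h₁.2, h₂.2] at hineq
  have key : ε * lgwCost πε ≤ ε * lgwCost πt := by linarith
  exact le_of_mul_le_mul_left key hε
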